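/- Let r > 0, let m ≥ 1, let a_1, …, a_m > 0 be real numbers, and set A_j = ∑_{i=1}^{j} a_i. Then ∑_{i=1}^{m} a_i^{−r} ≥ 2^{−(r+1)} ∑_{j=1}^{m} (j/A_j)^r. -/

import Mathlib

open Finset

private lemma holder_aux (r : ℝ) (hr : 0 < r) (S : Finset ℕ) (a : ℕ → ℝ)
    (ha : ∀ i ∈ S, 0 < a i) :
    (S.card : ℝ) ^ (1 + r) ≤ (∑ i ∈ S, a i ^ (-r)) * (∑ i ∈ S, a i) ^ r := by
  have h1r : (0:ℝ) < 1 + r := by linarith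
  rcases S.eq_empty_or_nonempty with hS | hS
  · simp [hS, Real.zero_rpow (ne_of_gt h1r)]
  set P := ∑ i ∈ S, a i ^ (-r) with hPdef
  set Q := ∑ i ∈ S, a i with hQdef
  have hPpos : 0 < P := Finset.sum_pos (fun i hi => Real.rpow_pos_of_pos (ha i hi) _) hS
  have hQpos : 0 < Q := Finset.sum_pos (fun i hi => ha i hi) hS
  have hpq : Real.HolderConjugate (1 + r) ((1 + r) / r) := by
    rw [Real.holderConjugate_iff]
    constructor
    · linarith
    · rw [inv_div]
      field_simp
  have key : (S.card : ℝ) ≤ P ^ (1/(1+r)) * Q ^ (r/(1+r)) := by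
    have H := Real.inner_le_Lp_mul_Lq_of_nonneg S hpq
      (f := fun i => a i ^ (-r/(1+r))) (g := fun i => a i ^ (r/(1+r)))
      (fun i hi => (Real.rpow_pos_of_pos (ha i hi) _).le)
      (fun i hi => (Real.rpow_pos_of_pos (ha i hi) _).le)
    have e1 : ∑ i ∈ S, a i ^ (-r/(1+r)) * a i ^ (r/(1+r)) = (S.card : ℝ) := by
      rw [Finset.sum_congr rfl (fun i hi => by
        rw [← Real.rpow_add (ha i hi),
          show -r/(1+r) + r/(1+r) = 0 by ring, Real.rpow_zero])]
      simp
    have e2 : ∑ i ∈ S, (a i ^ (-r/(1+r))) ^ (1+r) = P := by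
      refine Finset.sum_congr rfl (fun i hi => ?_)
      rw [← Real.rpow_mul (ha i hi).le]
      congr 1
      field_simp
    have e3 : ∑ i ∈ S, (a i ^ (r/(1+r))) ^ ((1+r)/r) = Q := by
      refine Finset.sum_congr rfl (fun i hi => ?_)
      rw [← Real.rpow_mul (ha i hi).le,
        show r/(1+r) * ((1+r)/r) = 1 by field_simp, Real.rpow_one]
    have e4 : 1/((1+r)/r) = r/(1+r) := by
      rw [one_div, inv_div]
    rw [e1, e2, e3, e4] at H
    exact H
  calc (S.card : ℝ) ^ (1+r) ≤ (P ^ (1/(1+r)) * Q ^ (r/(1+r))) ^ (1+r) :=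
        Real.rpow_le_rpow (by positivity) key h1r.le
    _ = P * Q ^ r := by
        rw [Real.mul_rpow (by positivity) (by positivity),
          ← Real.rpow_mul hPpos.le, ← Real.rpow_mul hQpos.le,
          show 1/(1+r) * (1+r) = 1 by field_simp,
          show r/(1+r) * (1+r) = r by field_simp, Real.rpow_one]

theorem stmt5 (r : ℝ) (hr : 0 < r) (m : ℕ) (hm : 1 ≤ m) (a : ℕ → ℝ)
    (hpos : ∀ i, 1 ≤ i → i ≤ m → 0 < a i) :
    (2 : ℝ) ^ (-(r + 1)) *
        ∑ j ∈ Finset.Icc 1 m, ((j : ℝ) / ∑ i ∈ Finset.Icc 1 j, a i) ^ r ≤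
      ∑ i ∈ Finset.Icc 1 m, (a i) ^ (-r) := by
  have h1r : (0:ℝ) < 1 + r := by linarith
  -- per-j key inequality
  have key : ∀ j ∈ Finset.Icc 1 m,
      ((j : ℝ) / ∑ i ∈ Finset.Icc 1 j, a i) ^ r ≤
        (2:ℝ) ^ (r+1) * ∑ i ∈ Finset.Icc (j/2+1) j, (1/(j:ℝ)) * a i ^ (-r) := by
    intro j hj
    obtain ⟨hj1, hjm⟩ := Finset.mem_Icc.mp hj
    set S := Finset.Icc (j/2+1) j with hSdef
    have haS : ∀ i ∈ S, 0 < a i := by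
      intro i hi
      obtain ⟨h1, h2⟩ := Finset.mem_Icc.mp hi
      exact hpos i (by omega) (by omega)
    have hcard : S.card = j - j/2 := by rw [hSdef, Nat.card_Icc]; omega
    have h2k : j ≤ 2 * S.card := by omega
    have hAj : 0 < ∑ i ∈ Finset.Icc 1 j, a i :=
      Finset.sum_pos (fun i hi => by
        obtain ⟨h1, h2⟩ := Finset.mem_Icc.mp hi
        exact hpos i h1 (by omega)) ⟨1, Finset.mem_Icc.mpr ⟨le_refl 1, hj1⟩⟩
    set Aj := ∑ i ∈ Finset.Icc 1 j, a i with hAdef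
    set P := ∑ i ∈ S, a i ^ (-r) with hPdef
    have hSne : S.Nonempty := Finset.card_pos.mp (by omega)
    have hPpos : 0 < P :=
      Finset.sum_pos (fun i hi => Real.rpow_pos_of_pos (haS i hi) _) hSne
    have hQle : (∑ i ∈ S, a i) ≤ Aj := by
      apply Finset.sum_le_sum_of_subset_of_nonneg
      · intro i hi
        obtain ⟨h1, h2⟩ := Finset.mem_Icc.mp hi
        exact Finset.mem_Icc.mpr ⟨by omega, h2⟩
      · intro i hi _
        obtain ⟨h1, h2⟩ := Finset.mem_Icc.mp hi
        exact (hpos i h1 (by omega)).le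
    have hh := holder_aux r hr S a haS
    have hh2 : (S.card : ℝ) ^ (1+r) ≤ P * Aj ^ r := by
      refine hh.trans (mul_le_mul_of_nonneg_left ?_ hPpos.le)
      exact Real.rpow_le_rpow (Finset.sum_nonneg fun i hi => (haS i hi).le) hQle hr.le
    have hj0 : (0:ℝ) < (j:ℝ) := by exact_mod_cast hj1
    have hmain : (j:ℝ) * (j:ℝ) ^ r ≤ 2 ^ (r+1) * P * Aj ^ r := by
      have c1 : (j:ℝ) * (j:ℝ) ^ r = (j:ℝ) ^ (1+r) := by
        rw [Real.rpow_add hj0, Real.rpow_one]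
      have c2 : (j:ℝ) ^ (1+r) ≤ ((2 * S.card : ℕ) : ℝ) ^ (1+r) :=
        Real.rpow_le_rpow (by positivity) (by exact_mod_cast h2k) h1r.le
      have c3 : ((2 * S.card : ℕ) : ℝ) ^ (1+r) = 2 ^ (1+r) * (S.card : ℝ) ^ (1+r) := by
        push_cast
        rw [Real.mul_rpow (by norm_num) (by positivity)]
      have c4 : (2:ℝ) ^ (1+r) = 2 ^ (r+1) := by rw [add_comm]
      calc (j:ℝ) * (j:ℝ) ^ r = (j:ℝ) ^ (1+r) := c1
        _ ≤ 2 ^ (1+r) * (S.card : ℝ) ^ (1+r) := c2.trans_eq c3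
        _ ≤ 2 ^ (1+r) * (P * Aj ^ r) := by
            exact mul_le_mul_of_nonneg_left hh2 (by positivity)
        _ = 2 ^ (r+1) * P * Aj ^ r := by rw [c4]; ring
    have hsum : ∑ i ∈ S, (1/(j:ℝ)) * a i ^ (-r) = (1/(j:ℝ)) * P := by
      rw [hPdef, Finset.mul_sum]
    rw [hsum, Real.div_rpow (by positivity) hAj.le]
    rw [div_le_iff₀ (by positivity : (0:ℝ) < Aj ^ r)]
    rw [show (2:ℝ)^(r+1) * ((1/(j:ℝ)) * P) * Aj ^ r = (2^(r+1) * P * Aj ^ r) / (j:ℝ) by ring]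
    rw [le_div_iff₀ hj0]
    nlinarith [hmain]
  -- swap the double sum
  have swap : ∑ j ∈ Finset.Icc 1 m, ∑ i ∈ Finset.Icc (j/2+1) j, (1/(j:ℝ)) * a i ^ (-r)
      = ∑ i ∈ Finset.Icc 1 m, ∑ j ∈ Finset.Icc i (min (2*i-1) m), (1/(j:ℝ)) * a i ^ (-r) := by
    refine Finset.sum_comm' ?_
    intro j i
    simp only [Finset.mem_Icc, le_min_iff, min_le_iff]
    omega
  -- bound the inner sums
  have inner : ∀ i ∈ Finset.Icc 1 m,
      ∑ j ∈ Finset.Icc i (min (2*i-1) m), (1/(j:ℝ)) * a i ^ (-r) ≤ a i ^ (-r) := by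
    intro i hi
    obtain ⟨hi1, him⟩ := Finset.mem_Icc.mp hi
    have hai : 0 < a i := hpos i hi1 him
    have hb : ∀ j ∈ Finset.Icc i (min (2*i-1) m),
        (1/(j:ℝ)) * a i ^ (-r) ≤ (1/(i:ℝ)) * a i ^ (-r) := by
      intro j hj
      obtain ⟨h1, h2⟩ := Finset.mem_Icc.mp hj
      have : (1:ℝ)/(j:ℝ) ≤ 1/(i:ℝ) := by
        apply one_div_le_one_div_of_le
        · exact_mod_cast hi1
        · exact_mod_cast h1
      exact mul_le_mul_of_nonneg_right this (Real.rpow_pos_of_pos hai _).le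
    have hcardle : (Finset.Icc i (min (2*i-1) m)).card ≤ i := by
      rw [Nat.card_Icc]; omega
    calc ∑ j ∈ Finset.Icc i (min (2*i-1) m), (1/(j:ℝ)) * a i ^ (-r)
        ≤ (Finset.Icc i (min (2*i-1) m)).card • ((1/(i:ℝ)) * a i ^ (-r)) :=
          Finset.sum_le_card_nsmul _ _ _ hb
      _ = ((Finset.Icc i (min (2*i-1) m)).card : ℝ) * ((1/(i:ℝ)) * a i ^ (-r)) := by
          rw [nsmul_eq_mul]
      _ ≤ (i:ℝ) * ((1/(i:ℝ)) * a i ^ (-r)) := by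
          refine mul_le_mul_of_nonneg_right ?_ (by positivity)
          exact_mod_cast hcardle
      _ = a i ^ (-r) := by
          rw [← mul_assoc, mul_one_div, div_self (by exact_mod_cast (Nat.cast_ne_zero (R := ℝ)).mpr (by omega : i ≠ 0)), one_mul]
  -- put everything together
  have chain : ∑ j ∈ Finset.Icc 1 m, ((j : ℝ) / ∑ i ∈ Finset.Icc 1 j, a i) ^ r
      ≤ (2:ℝ) ^ (r+1) * ∑ i ∈ Finset.Icc 1 m, a i ^ (-r) := by
    calc ∑ j ∈ Finset.Icc 1 m, ((j : ℝ) / ∑ i ∈ Finset.Icc 1 j, a i) ^ r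
        ≤ ∑ j ∈ Finset.Icc 1 m, (2:ℝ) ^ (r+1) *
            ∑ i ∈ Finset.Icc (j/2+1) j, (1/(j:ℝ)) * a i ^ (-r) :=
          Finset.sum_le_sum key
      _ = (2:ℝ) ^ (r+1) * ∑ j ∈ Finset.Icc 1 m,
            ∑ i ∈ Finset.Icc (j/2+1) j, (1/(j:ℝ)) * a i ^ (-r) := by
          rw [Finset.mul_sum]
      _ = (2:ℝ) ^ (r+1) * ∑ i ∈ Finset.Icc 1 m,
            ∑ j ∈ Finset.Icc i (min (2*i-1) m), (1/(j:ℝ)) * a i ^ (-r) := by rw [swap]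
      _ ≤ (2:ℝ) ^ (r+1) * ∑ i ∈ Finset.Icc 1 m, a i ^ (-r) :=
          mul_le_mul_of_nonneg_left (Finset.sum_le_sum inner) (by positivity)
  calc (2 : ℝ) ^ (-(r + 1)) *
        ∑ j ∈ Finset.Icc 1 m, ((j : ℝ) / ∑ i ∈ Finset.Icc 1 j, a i) ^ r
      ≤ (2:ℝ) ^ (-(r+1)) * ((2:ℝ) ^ (r+1) * ∑ i ∈ Finset.Icc 1 m, a i ^ (-r)) :=
        mul_le_mul_of_nonneg_left chain (by positivity)
    _ = ∑ i ∈ Finset.Icc 1 m, a i ^ (-r) := by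
        rw [← mul_assoc, ← Real.rpow_add (by norm_num : (0:ℝ) < 2),
          show -(r+1) + (r+1) = 0 by ring, Real.rpow_zero, one_mul]
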